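/- There exists a constant C > 0 such that for all sufficiently large n, τ(n) ≤ n^{C / log log n}. -/

import Mathlib

open Real Filter Finset


private lemma tauA (n : ℕ) (hn : n ≠ 0) (ε : ℝ) (hε : 0 < ε) (hε1 : ε ≤ 1) :
    (n.divisors.card : ℝ) ≤ (2 / (ε * Real.log 2)) ^ ((2:ℝ) ^ (1/ε) + 1) * (n:ℝ) ^ ε := by
  have hlog2 : 0 < Real.log 2 := Real.log_pos one_lt_two
  set M : ℝ := 2 / (ε * Real.log 2) with hMdef
  have hlog2le : Real.log 2 ≤ 1 := by
    have := Real.log_le_sub_one_of_pos (by norm_num : (0:ℝ) < 2); linarith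
  have hM1 : 1 ≤ M := by
    rw [hMdef, le_div_iff₀ (by positivity)]
    nlinarith
  have hM0 : 0 < M := lt_of_lt_of_le one_pos hM1
  -- per-factor bound
  have factor : ∀ p ∈ n.primeFactors,
      ((n.factorization p + 1 : ℕ) : ℝ) ≤
        (if (p:ℝ) ^ ε < 2 then M else 1) * (p:ℝ) ^ (ε * (n.factorization p : ℕ)) := by
    intro p hp
    have hpp : p.Prime := Nat.prime_of_mem_primeFactors hp
    have hp2 : (2:ℝ) ≤ (p:ℝ) := by exact_mod_cast hpp.two_le
    have hp0 : (0:ℝ) < p := by linarith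
    set a : ℕ := n.factorization p with ha
    have ha1 : 1 ≤ a := (Nat.Prime.factorization_pos_of_dvd hpp hn
      (Nat.dvd_of_mem_primeFactors hp))
    have haR : (1:ℝ) ≤ (a:ℝ) := by exact_mod_cast ha1
    by_cases hsmall : (p:ℝ) ^ ε < 2
    · rw [if_pos hsmall]
      have hlogp : Real.log 2 ≤ Real.log p := Real.log_le_log (by norm_num) hp2
      have hexp : ε * a * Real.log 2 ≤ (p:ℝ) ^ (ε * a) := by
        rw [Real.rpow_def_of_pos hp0]
        have h1 : ε * a * Real.log 2 ≤ ε * a * Real.log p := by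
          have : (0:ℝ) ≤ ε * a := by positivity
          nlinarith
        have h2 : ε * a * Real.log p ≤ Real.exp (Real.log p * (ε * a)) := by
          have := Real.add_one_le_exp (Real.log p * (ε * a))
          nlinarith
        linarith
      calc ((a + 1 : ℕ) : ℝ) ≤ 2 * a := by push_cast; linarith
        _ = M * (ε * a * Real.log 2) := by rw [hMdef]; field_simp
        _ ≤ M * (p:ℝ) ^ (ε * a) := mul_le_mul_of_nonneg_left hexp hM0.le
    · rw [if_neg hsmall, one_mul]
      push_neg at hsmall
      have h1 : ((a + 1 : ℕ) : ℝ) ≤ (2:ℝ) ^ (a:ℕ) := by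
        exact_mod_cast Nat.succ_le_of_lt (Nat.lt_two_pow_self (n := a))
      have h2 : ((2:ℝ)) ^ (a:ℕ) ≤ ((p:ℝ) ^ ε) ^ (a:ℕ) :=
        pow_le_pow_left₀ (by norm_num) hsmall a
      have h3 : ((p:ℝ) ^ ε) ^ (a:ℕ) = (p:ℝ) ^ (ε * a) := by
        rw [← Real.rpow_natCast ((p:ℝ) ^ ε) a, ← Real.rpow_mul hp0.le]
      linarith [h1.trans h2, h3.le, h3.ge]
  -- assemble
  rw [Nat.card_divisors hn]
  push_cast
  have step1 : (∏ p ∈ n.primeFactors, ((n.factorization p : ℝ) + 1)) ≤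
      ∏ p ∈ n.primeFactors,
        ((if (p:ℝ) ^ ε < 2 then M else 1) * (p:ℝ) ^ (ε * (n.factorization p : ℕ))) := by
    apply Finset.prod_le_prod
    · intro p hp; positivity
    · intro p hp; have := factor p hp; push_cast at this ⊢; linarith
  rw [Finset.prod_mul_distrib] at step1
  have hprod2 : (∏ p ∈ n.primeFactors, (p:ℝ) ^ (ε * (n.factorization p : ℕ))) = (n:ℝ) ^ ε := by
    have : ∀ p ∈ n.primeFactors, (p:ℝ) ^ (ε * (n.factorization p : ℕ))
        = (((p ^ n.factorization p : ℕ) : ℝ)) ^ ε := by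
      intro p hp
      have hp0 : (0:ℝ) ≤ p := Nat.cast_nonneg p
      rw [mul_comm, Real.rpow_mul hp0, Real.rpow_natCast]
      push_cast; ring_nf
    rw [Finset.prod_congr rfl this, Real.finset_prod_rpow _ _ (fun p _ => by positivity) ε]
    congr 1
    rw [← Nat.cast_prod]
    norm_cast
    exact Nat.factorization_prod_pow_eq_self hn
  have hprod1 : (∏ p ∈ n.primeFactors, (if (p:ℝ) ^ ε < 2 then M else 1)) ≤
      M ^ ((2:ℝ) ^ (1/ε) + 1) := by
    rw [Finset.prod_ite, Finset.prod_const, Finset.prod_const_one, mul_one]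
    set S := n.primeFactors.filter (fun p : ℕ => (p:ℝ) ^ ε < 2) with hS
    have hcard : (S.card : ℝ) ≤ (2:ℝ) ^ (1/ε) + 1 := by
      have hsub : S ⊆ Finset.range (⌊(2:ℝ) ^ (1/ε)⌋₊ + 1) := by
        intro p hp
        rw [hS, Finset.mem_filter] at hp
        obtain ⟨hp1, hp2⟩ := hp
        have hp0 : (0:ℝ) ≤ p := Nat.cast_nonneg p
        have : (p:ℝ) < (2:ℝ) ^ (1/ε) := by
          have h := Real.rpow_lt_rpow (by positivity) hp2 (by positivity : (0:ℝ) < 1/ε)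
          rwa [← Real.rpow_mul hp0, mul_one_div_cancel hε.ne', Real.rpow_one] at h
        rw [Finset.mem_range, Nat.lt_succ_iff]
        exact Nat.le_floor this.le
      have := Finset.card_le_card hsub
      rw [Finset.card_range] at this
      have h2 : ((⌊(2:ℝ) ^ (1/ε)⌋₊ : ℝ)) ≤ (2:ℝ) ^ (1/ε) := Nat.floor_le (by positivity)
      have : (S.card : ℝ) ≤ (⌊(2:ℝ) ^ (1/ε)⌋₊ : ℝ) + 1 := by exact_mod_cast this
      linarith
    calc M ^ S.card = M ^ (S.card : ℝ) := by rw [Real.rpow_natCast]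
      _ ≤ M ^ ((2:ℝ) ^ (1/ε) + 1) := Real.rpow_le_rpow_of_exponent_le hM1 hcard
  calc (∏ p ∈ n.primeFactors, ((n.factorization p : ℝ) + 1))
      ≤ (∏ p ∈ n.primeFactors, (if (p:ℝ) ^ ε < 2 then M else 1)) *
        (∏ p ∈ n.primeFactors, (p:ℝ) ^ (ε * (n.factorization p : ℕ))) := step1
    _ ≤ M ^ ((2:ℝ) ^ (1/ε) + 1) * (n:ℝ) ^ ε := by
        rw [hprod2]
        apply mul_le_mul_of_nonneg_right hprod1 (by positivity)

private lemma tauE : ∀ᶠ y : ℝ in atTop, 1 ≤ Real.log y ∧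
    ((2:ℝ) ^ (Real.log y) + 1) * Real.log (2 * Real.log y / Real.log 2) * Real.log y ≤ y := by
  have hlog2 : 0 < Real.log 2 := Real.log_pos one_lt_two
  have h1 : ∀ᶠ y : ℝ in atTop, 1 ≤ Real.log y := Real.tendsto_log_atTop.eventually_ge_atTop 1
  have h2 : ∀ᶠ y : ℝ in atTop, Real.log y ≤ y ^ (8⁻¹:ℝ) := by
    filter_upwards [(isLittleO_log_rpow_atTop (show (0:ℝ) < 8⁻¹ by norm_num)).bound
      one_pos, eventually_ge_atTop (1:ℝ)] with y hy hy1
    have h0 : (0:ℝ) ≤ Real.log y := Real.log_nonneg hy1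
    have h0' : (0:ℝ) ≤ y ^ (8⁻¹:ℝ) := Real.rpow_nonneg (by linarith) _
    rw [Real.norm_eq_abs, Real.norm_eq_abs, abs_of_nonneg h0, abs_of_nonneg h0', one_mul] at hy
    exact hy
  have h3 : ∀ᶠ y : ℝ in atTop, 2 * Real.log y / Real.log 2 ≤ y := by
    filter_upwards [Real.isLittleO_log_id_atTop.bound
      (show (0:ℝ) < Real.log 2 / 2 by positivity), eventually_ge_atTop (1:ℝ)] with y hy hy1
    have h0 : (0:ℝ) ≤ Real.log y := Real.log_nonneg hy1
    rw [Real.norm_eq_abs, Real.norm_eq_abs, abs_of_nonneg h0, id,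
      abs_of_nonneg (by linarith : (0:ℝ) ≤ y)] at hy
    rw [div_le_iff₀ hlog2]
    nlinarith
  have h4 : ∀ᶠ y : ℝ in atTop, (2:ℝ) ≤ y ^ (1 - Real.log 2 - 4⁻¹ : ℝ) := by
    have hpos : (0:ℝ) < 1 - Real.log 2 - 4⁻¹ := by
      have := Real.log_two_lt_d9; norm_num at this ⊢; linarith
    exact (tendsto_rpow_atTop hpos).eventually_ge_atTop 2
  filter_upwards [h1, h2, h3, h4, eventually_gt_atTop (1:ℝ)] with y hy1 hy2 hy3 hy4 hy5
  refine ⟨hy1, ?_⟩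
  have hy0 : (0:ℝ) < y := by linarith
  have hly0 : (0:ℝ) ≤ Real.log y := by linarith
  set L := Real.log y with hL
  set A := y ^ (Real.log 2) with hA
  have hid : (2:ℝ) ^ L = A := by
    rw [hA, Real.rpow_def_of_pos two_pos, Real.rpow_def_of_pos hy0, mul_comm]
  have hA0 : (0:ℝ) ≤ A := Real.rpow_nonneg hy0.le _
  have hA1 : (1:ℝ) ≤ A := Real.one_le_rpow (by linarith) hlog2.le
  set lM := Real.log (2 * L / Real.log 2) with hlM
  have hargpos : (1:ℝ) ≤ 2 * L / Real.log 2 := by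
    rw [le_div_iff₀ hlog2]
    have : Real.log 2 ≤ 1 := by
      have := Real.log_two_lt_d9; linarith
    nlinarith
  have hlM0 : (0:ℝ) ≤ lM := Real.log_nonneg hargpos
  have hlML : lM ≤ L := Real.log_le_log (by linarith) hy3
  have hsq : L * L ≤ y ^ (4⁻¹:ℝ) := by
    calc L * L ≤ y ^ (8⁻¹:ℝ) * y ^ (8⁻¹:ℝ) := mul_le_mul hy2 hy2 hly0 (by positivity)
      _ = y ^ (4⁻¹:ℝ) := by rw [← Real.rpow_add hy0]; norm_num
  have hprod : A * y ^ (4⁻¹:ℝ) * y ^ (1 - Real.log 2 - 4⁻¹ : ℝ) = y := by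
    rw [hA, ← Real.rpow_add hy0, ← Real.rpow_add hy0,
      show Real.log 2 + 4⁻¹ + (1 - Real.log 2 - 4⁻¹) = 1 by ring, Real.rpow_one]
  rw [hid]
  have s1 : (A + 1) * lM * L ≤ (2 * A) * lM * L := by
    have := mul_le_mul_of_nonneg_right
      (mul_le_mul_of_nonneg_right (by linarith : A + 1 ≤ 2 * A) hlM0) hly0
    exact this
  have s2 : (2 * A) * lM * L ≤ (2 * A) * L * L :=
    mul_le_mul_of_nonneg_right (mul_le_mul_of_nonneg_left hlML (by positivity)) hly0
  have s3 : (2 * A) * L * L = 2 * A * (L * L) := by ring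
  have s4 : 2 * A * (L * L) ≤ 2 * A * y ^ (4⁻¹:ℝ) :=
    mul_le_mul_of_nonneg_left hsq (by positivity)
  have s5 : 2 * A * y ^ (4⁻¹:ℝ) ≤ y := by
    have h := mul_le_mul_of_nonneg_right hy4 (by positivity : (0:ℝ) ≤ A * y ^ (4⁻¹:ℝ))
    calc 2 * A * y ^ (4⁻¹:ℝ) = 2 * (A * y ^ (4⁻¹:ℝ)) := by ring
      _ ≤ y ^ (1 - Real.log 2 - 4⁻¹ : ℝ) * (A * y ^ (4⁻¹:ℝ)) := h
      _ = A * y ^ (4⁻¹:ℝ) * y ^ (1 - Real.log 2 - 4⁻¹ : ℝ) := by ring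
      _ = y := hprod
  linarith

theorem tau_max_order :
    ∃ C : ℝ, 0 < C ∧ ∃ N : ℕ, ∀ n : ℕ, N ≤ n →
      (n.divisors.card : ℝ) ≤ (n : ℝ) ^ (C / Real.log (Real.log n)) := by
  refine ⟨2, by norm_num, ?_⟩
  have hlog2 : 0 < Real.log 2 := Real.log_pos one_lt_two
  have hcomp : Tendsto (fun n : ℕ => Real.log n) atTop atTop :=
    Real.tendsto_log_atTop.comp tendsto_natCast_atTop_atTop
  have E2 : ∀ᶠ n : ℕ in atTop, (1 ≤ Real.log (Real.log n) ∧
      ((2:ℝ) ^ (Real.log (Real.log n)) + 1) *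
        Real.log (2 * Real.log (Real.log n) / Real.log 2) * Real.log (Real.log n)
        ≤ Real.log n) ∧ 2 ≤ n := (hcomp.eventually tauE).and (eventually_ge_atTop 2)
  obtain ⟨N, hN⟩ := eventually_atTop.mp E2
  refine ⟨N, fun n hn => ?_⟩
  obtain ⟨⟨hL2, hmain⟩, hn2⟩ := hN n hn
  have hn0 : n ≠ 0 := by omega
  have hnR : (2:ℝ) ≤ (n:ℝ) := by exact_mod_cast hn2
  have hL1 : (0:ℝ) < Real.log n := Real.log_pos (by linarith)
  set L1 := Real.log n with hL1def
  set L2 := Real.log L1 with hL2def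
  have hL2p : (0:ℝ) < L2 := by linarith
  set ε : ℝ := 1 / L2 with hε
  have hεp : 0 < ε := by positivity
  have hε1 : ε ≤ 1 := by rw [hε]; rw [div_le_one hL2p]; linarith
  have key := tauA n hn0 ε hεp hε1
  have hinv : 1 / ε = L2 := by rw [hε, one_div_one_div]
  rw [hinv] at key
  -- M^(2^L2+1) ≤ n^(1/L2)
  have hM0 : (0:ℝ) < 2 / (ε * Real.log 2) := by positivity
  have hbd : (2 / (ε * Real.log 2)) ^ ((2:ℝ) ^ L2 + 1) ≤ (n:ℝ) ^ ε := by
    rw [Real.rpow_def_of_pos hM0, Real.rpow_def_of_pos (by linarith : (0:ℝ) < (n:ℝ))]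
    apply Real.exp_le_exp.mpr
    have hMeq : 2 / (ε * Real.log 2) = 2 * L2 / Real.log 2 := by
      rw [hε]; field_simp
    rw [hMeq]
    have hexp : ((2:ℝ) ^ L2 + 1) * Real.log (2 * L2 / Real.log 2) * L2 ≤ L1 := hmain
    have h2L : (0:ℝ) < (2:ℝ) ^ L2 + 1 := by positivity
    rw [show Real.log ↑n * ε = L1 / L2 by rw [hε]; field_simp; rfl]
    rw [mul_comm (Real.log (2 * L2 / Real.log 2))]
    rw [le_div_iff₀ hL2p]
    exact hexp
  have hfin : (n:ℝ) ^ ε * (n:ℝ) ^ ε = (n:ℝ) ^ ((2:ℝ) / L2) := by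
    rw [← Real.rpow_add (by linarith : (0:ℝ) < (n:ℝ)), hε]; ring_nf
  calc (n.divisors.card : ℝ) ≤ (2 / (ε * Real.log 2)) ^ ((2:ℝ) ^ L2 + 1) * (n:ℝ) ^ ε := key
    _ ≤ (n:ℝ) ^ ε * (n:ℝ) ^ ε := mul_le_mul_of_nonneg_right hbd (by positivity)
    _ = (n:ℝ) ^ ((2:ℝ) / L2) := hfin
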